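/- arXiv:1302.2007 — 5 statements merged into one kernel-verified Lean document; each statement's English description precedes it below -/
import Mathlib

section
/- Let u be a hermitian functional in the class Δ with minimal self-reciprocal annihilating polynomial Q (u·Q = 0, Q = Q*, deg Q = q). Then its Carathéodory formal series F satisfies F·Q = P for a polynomial P with deg P ≤ q and P^{*_q} = −P, where P^{*_q}(z) = z^q conj(P(1/conj z)). Conversely, if F·Q = P with Q = Q*, deg Q = q and P^{*_q} = −P, then u·Q = 0. -/
open LaurentPolynomial Complex Polynomial

noncomputable section

abbrev LP := LaurentPolynomial ℂ
abbrev Func := LP →ₗ[ℂ] ℂ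

/-- The coefficients of a Laurent polynomial, as a finitely supported function on `ℤ`. -/
def coeF (L : LP) : ℤ →₀ ℂ := L.coeff

/-- The modified functional `u·L`, defined by `(u·L)[f] = u[L·f]`. -/
def smulF (u : Func) (L : LP) : Func := u ∘ₗ LinearMap.mulLeft ℂ L

/-- The moments `μ_n = u[zⁿ]`. -/
def moment (u : Func) (n : ℤ) : ℂ := u (T n)

/-- A functional is hermitian if `μ_{-n} = conj μ_n`. -/
def IsHermitian (u : Func) : Prop := ∀ n : ℤ, moment u (-n) = (starRingEnd ℂ) (moment u n)

/-- The Carathéodory formal series `F(z) = μ₀ + 2 Σ_{n≥1} μ_{-n} zⁿ`, as coefficients. -/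
def CS (u : Func) : ℤ → ℂ := fun n => if n = 0 then moment u 0 else if 0 < n then 2 * moment u (-n) else 0

/-- The Laurent formal series `L[u](z) = Σ_{n∈ℤ} μ_{-n} zⁿ`, as coefficients. -/
def LS (u : Func) : ℤ → ℂ := fun n => moment u (-n)

/-- `H_*(z) = conj (H (1/conj z))`, coefficient-wise. -/
def starS (H : ℤ → ℂ) : ℤ → ℂ := fun n => (starRingEnd ℂ) (H (-n))

/-- Product of a formal doubly-infinite series with a Laurent polynomial. -/
def mulS (H : ℤ → ℂ) (L : LP) : ℤ → ℂ := fun n => (coeF L).sum fun k c => c * H (n - k)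

/-- The `*` operation on Laurent polynomials: `L_*(z) = conj (L (1/conj z))`. -/
def starLP (L : LP) : LP :=
  AddMonoidAlgebra.ofCoeff (Finsupp.equivMapDomain (Equiv.neg ℤ)
    (Finsupp.mapRange (starRingEnd ℂ) (map_zero _) (coeF L)) : ℤ →₀ ℂ)

/-- A Laurent polynomial as a formal series. -/
def polyS (N : LP) : ℤ → ℂ := fun n => coeF N n

/-- The Lebesgue functional `leb[zⁿ] = δ_{n,0}`. -/
def lebF : Func := (Finsupp.lapply (0 : ℤ) : (ℤ →₀ ℂ) →ₗ[ℂ] ℂ) ∘ₗ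
  (AddMonoidAlgebra.coeffLinearEquiv ℂ).toLinearMap

/-- The Dirac delta at `z = 1`: evaluation at `1`. -/
def delta1 : Func := (Finsupp.lsum ℂ (fun _ : ℤ => (LinearMap.id : ℂ →ₗ[ℂ] ℂ)) : (ℤ →₀ ℂ) →ₗ[ℂ] ℂ) ∘ₗ
  (AddMonoidAlgebra.coeffLinearEquiv ℂ).toLinearMap

/-- `P* (z) = z^q conj(P(1/conj z))` with `q` given: conjugate coefficients and reflect at `q`. -/
def starDeg (q : ℕ) (P : Polynomial ℂ) : Polynomial ℂ := Polynomial.reflect q (P.map (starRingEnd ℂ))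

/-- The class `Δ` of hermitian functionals annihilated by a nonzero Laurent polynomial. -/
def InDelta (u : Func) : Prop := IsHermitian u ∧ ∃ N : LP, N ≠ 0 ∧ smulF u N = 0

lemma coeF_toLaurent_nat (Q : Polynomial ℂ) (k : ℕ) :
    coeF (Polynomial.toLaurent Q) (k : ℤ) = Q.coeff k := by
  show (Polynomial.toLaurent Q).coeff (k : ℤ) = Q.coeff k
  rw [LaurentPolynomial.coeff_toLaurent]
  exact Finsupp.mapDomain_apply Nat.castEmbedding.injective Q.toFinsupp.coeff k

lemma coeF_toLaurent_neg (Q : Polynomial ℂ) (k : ℤ) (hk : k < 0) :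
    coeF (Polynomial.toLaurent Q) k = 0 := by
  show (Polynomial.toLaurent Q).coeff k = 0
  rw [LaurentPolynomial.coeff_toLaurent]
  apply Finsupp.mapDomain_notin_range
  rintro ⟨m, rfl⟩; change ((m : ℤ)) < 0 at hk; omega

lemma mulS_toLaurent (H : ℤ → ℂ) (Q : Polynomial ℂ) {q : ℕ} (hq : Q.natDegree < q + 1) (n : ℤ) :
    mulS H (Polynomial.toLaurent Q) n = ∑ k ∈ Finset.range (q + 1), Q.coeff k * H (n - k) := by
  unfold mulS coeF
  rw [LaurentPolynomial.coeff_toLaurent,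
    Finsupp.sum_mapDomain_index_inj Nat.castEmbedding.injective]
  have : (Q.toFinsupp.coeff.sum fun a b => b * H (n - Nat.castEmbedding a)) = Q.sum fun a b => b * H (n - a) := rfl
  rw [this, Polynomial.sum_over_range' Q (fun m => zero_mul (H (n - (m:ℤ)))) _ hq]

lemma u_C_mul (u : Func) (r : ℂ) (x : LP) : u (LaurentPolynomial.C r * x) = r * u x := by
  rw [LaurentPolynomial.C_eq_algebraMap, ← Algebra.smul_def, map_smul, smul_eq_mul]

lemma apply_mul_T (u : Func) (Q : Polynomial ℂ) {q : ℕ} (hq : Q.natDegree < q + 1) (m : ℤ) :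
    u (Polynomial.toLaurent Q * T m) = ∑ k ∈ Finset.range (q + 1), Q.coeff k * moment u (k + m) := by
  conv_lhs => rw [Polynomial.as_sum_range' Q (q + 1) hq]
  rw [map_sum, Finset.sum_mul, map_sum]
  refine Finset.sum_congr rfl fun k _ => ?_
  rw [Polynomial.toLaurent_C_mul_T, mul_assoc, ← T_add, u_C_mul]
  rfl

lemma CS_add_star (u : Func) (hu : IsHermitian u) (n : ℤ) :
    CS u n + (starRingEnd ℂ) (CS u (-n)) = 2 * moment u (-n) := by
  unfold CS
  rcases lt_trichotomy n 0 with h | h | h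
  · have h1 : ¬ n = 0 := by omega
    have h2 : ¬ 0 < n := by omega
    have h3 : ¬ (-n) = 0 := by omega
    have h4 : 0 < -n := by omega
    simp only [h1, h2, h3, h4, if_false, if_true, if_neg, if_pos]
    rw [zero_add, neg_neg, map_mul, hu n]
    norm_num
    left
    simp [Complex.ext_iff]
  · subst h
    have h0 := hu 0
    rw [neg_zero] at h0
    simp only [neg_zero, if_pos rfl, if_true]
    rw [← h0, two_mul]
  · have h1 : ¬ n = 0 := by omega
    have h3 : ¬ (-n) = 0 := by omega
    have h4 : ¬ 0 < -n := by omega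
    simp only [h1, h, h3, h4, if_false, if_true, if_neg, if_pos]
    rw [map_zero, add_zero]

lemma selfrec_coeff (Q : Polynomial ℂ) (q : ℕ) (hQ : starDeg q Q = Q) {k : ℕ} (hk : k ≤ q) :
    (starRingEnd ℂ) (Q.coeff k) = Q.coeff (q - k) := by
  have h := congrArg (fun p => Polynomial.coeff p k) hQ
  simp only [starDeg, Polynomial.coeff_reflect, Polynomial.coeff_map,
    Polynomial.revAt_le hk] at h
  rw [← h, Complex.conj_conj]

lemma master (u : Func) (hu : IsHermitian u) (Q : Polynomial ℂ)
    (hQ : starDeg Q.natDegree Q = Q) (n : ℤ) :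
    mulS (CS u) (Polynomial.toLaurent Q) n
      + (starRingEnd ℂ) (mulS (CS u) (Polynomial.toLaurent Q) ((Q.natDegree : ℤ) - n))
      = 2 * u (Polynomial.toLaurent Q * T (-n)) := by
  set q := Q.natDegree with hqdef
  rw [mulS_toLaurent _ _ (Nat.lt_succ_self q) n, mulS_toLaurent _ _ (Nat.lt_succ_self q) _,
    apply_mul_T u Q (Nat.lt_succ_self q), map_sum]
  have key : (∑ k ∈ Finset.range (q + 1), (starRingEnd ℂ) (Q.coeff k * CS u ((q : ℤ) - n - k)))
      = ∑ k ∈ Finset.range (q + 1), Q.coeff k * (starRingEnd ℂ) (CS u (-(n - k))) := by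
    rw [← Finset.sum_range_reflect]
    refine Finset.sum_congr rfl fun k hk => ?_
    have hk' : k ≤ q := by simpa [Nat.lt_succ_iff] using hk
    have h1 : q + 1 - 1 - k = q - k := by omega
    rw [h1, map_mul, selfrec_coeff Q q hQ (by omega : q - k ≤ q),
      Nat.sub_sub_self hk']
    congr 2
    have : ((q - k : ℕ) : ℤ) = (q : ℤ) - k := by omega
    rw [this]; ring
  rw [key, ← Finset.sum_add_distrib, Finset.mul_sum]
  refine Finset.sum_congr rfl fun k hk => ?_
  rw [← mul_add, CS_add_star u hu (n - k)]
  have : -(n - (k : ℤ)) = (k : ℤ) + -n := by ring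
  rw [this]; ring

/-- for `u ∈ Δ` with minimal self-reciprocal annihilating polynomial `Q`
(of degree `q`), the Carathéodory series satisfies `F·Q = P` with `deg P ≤ q` and
`P^{*_q} = -P`; conversely `F·Q = P` with these symmetries implies `u·Q = 0`. -/
theorem stmt5 (u : Func) (hu : IsHermitian u) :
    (∀ Q : Polynomial ℂ, Q ≠ 0 → smulF u (Polynomial.toLaurent Q) = 0 →
      starDeg Q.natDegree Q = Q →
      (∀ Q₁ : Polynomial ℂ, smulF u (Polynomial.toLaurent Q₁) = 0 → Q ∣ Q₁) →
      ∃ P : Polynomial ℂ, P.natDegree ≤ Q.natDegree ∧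
        mulS (CS u) (Polynomial.toLaurent Q) = polyS (Polynomial.toLaurent P) ∧
        starDeg Q.natDegree P = -P) ∧
    (∀ Q P : Polynomial ℂ, Q ≠ 0 → starDeg Q.natDegree Q = Q →
      P.natDegree ≤ Q.natDegree → starDeg Q.natDegree P = -P →
      mulS (CS u) (Polynomial.toLaurent Q) = polyS (Polynomial.toLaurent P) →
      smulF u (Polynomial.toLaurent Q) = 0) := by
  constructor
  · intro Q hQ0 hann hQstar _hmin
    set q := Q.natDegree with hq
    have h0 : ∀ m : ℤ, u (Polynomial.toLaurent Q * T m) = 0 := by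
      intro m
      have h := LinearMap.congr_fun hann (T m)
      simpa [smulF] using h
    set p : ℤ → ℂ := mulS (CS u) (Polynomial.toLaurent Q) with hp
    have hneg : ∀ n : ℤ, n < 0 → p n = 0 := by
      intro n hn
      rw [hp, mulS_toLaurent _ _ (Nat.lt_succ_self q) n]
      refine Finset.sum_eq_zero fun k _ => ?_
      have hcs : CS u (n - k) = 0 := by
        have h1 : ¬ (n - (k : ℤ)) = 0 := by omega
        have h2 : ¬ (0 : ℤ) < n - (k : ℤ) := by omega
        simp [CS, h1, h2]
        intro h3; omega
      rw [hcs, mul_zero]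
    have hstar : ∀ n : ℤ, p n + (starRingEnd ℂ) (p ((q : ℤ) - n)) = 0 := by
      intro n
      rw [hp, master u hu Q hQstar n, h0, mul_zero]
    have hhigh : ∀ n : ℤ, (q : ℤ) < n → p n = 0 := by
      intro n hn
      have h1 := hstar ((q : ℤ) - n)
      rw [hneg _ (by omega), zero_add] at h1
      have h2 : (q : ℤ) - ((q : ℤ) - n) = n := by ring
      rw [h2] at h1
      exact (starRingEnd ℂ).injective (by simpa using h1)
    have hPcoeff : ∀ m : ℕ,
        (∑ k ∈ Finset.range (q + 1), Polynomial.monomial k (p k)).coeff m = p m := by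
      intro m
      rw [Polynomial.finset_sum_coeff]
      simp only [Polynomial.coeff_monomial]
      rw [Finset.sum_ite_eq' (Finset.range (q + 1)) m]
      by_cases hm : m ∈ Finset.range (q + 1)
      · rw [if_pos hm]
      · rw [if_neg hm]
        rw [Finset.mem_range] at hm
        exact (hhigh m (by omega)).symm
    refine ⟨∑ k ∈ Finset.range (q + 1), Polynomial.monomial k (p k), ?_, ?_, ?_⟩
    · refine Polynomial.natDegree_le_iff_coeff_eq_zero.mpr fun m hm => ?_
      rw [hPcoeff]
      exact hhigh m (by exact_mod_cast hm)
    · funext n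
      cases n with
      | ofNat m =>
        show p (m : ℤ) = polyS _ (m : ℤ)
        rw [polyS]
        rw [coeF_toLaurent_nat, hPcoeff]
      | negSucc m =>
        show p (Int.negSucc m) = polyS _ (Int.negSucc m)
        rw [polyS]
        rw [coeF_toLaurent_neg _ _ (Int.negSucc_lt_zero m), hneg _ (Int.negSucc_lt_zero m)]
    · ext m
      rw [starDeg, Polynomial.coeff_reflect, Polynomial.coeff_map, Polynomial.coeff_neg]
      by_cases hm : m ≤ q
      · rw [Polynomial.revAt_le hm, hPcoeff, hPcoeff]
        have h1 := hstar (m : ℤ)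
        have h2 : ((q - m : ℕ) : ℤ) = (q : ℤ) - m := by omega
        rw [h2]
        linear_combination h1
      · rw [Polynomial.revAt_eq_self_of_lt (by omega), hPcoeff, hhigh m (by omega),
          map_zero, neg_zero]
  · intro Q P hQ0 hQstar hdeg hPstar hFQ
    set q := Q.natDegree with hq
    have hPc : ∀ m : ℕ, m ≤ q → (starRingEnd ℂ) (P.coeff (q - m)) = -P.coeff m := by
      intro m hm
      have h := congrArg (fun p => Polynomial.coeff p m) hPstar
      simpa [starDeg, Polynomial.coeff_reflect, Polynomial.coeff_map,
        Polynomial.revAt_le hm] using h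
    have hz : ∀ n : ℤ, polyS (Polynomial.toLaurent P) n
        + (starRingEnd ℂ) (polyS (Polynomial.toLaurent P) ((q : ℤ) - n)) = 0 := by
      intro n
      rcases lt_or_ge n 0 with h | h
      · rw [polyS, polyS, coeF_toLaurent_neg _ _ h]
        obtain ⟨j, hj⟩ : ∃ j : ℕ, (q : ℤ) - n = (j : ℤ) := ⟨((q : ℤ) - n).toNat, by omega⟩
        rw [hj, coeF_toLaurent_nat,
          Polynomial.coeff_eq_zero_of_natDegree_lt (by omega : P.natDegree < j),
          map_zero, add_zero]
      · rcases le_or_gt n (q : ℤ) with h2 | h2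
        · obtain ⟨m, rfl⟩ : ∃ m : ℕ, n = (m : ℤ) := ⟨n.toNat, by omega⟩
          have hm : m ≤ q := by omega
          have h3 : ((q - m : ℕ) : ℤ) = (q : ℤ) - m := by omega
          rw [polyS, polyS, ← h3, coeF_toLaurent_nat, coeF_toLaurent_nat, hPc m hm]
          ring
        · obtain ⟨m, rfl⟩ : ∃ m : ℕ, n = (m : ℤ) := ⟨n.toNat, by omega⟩
          rw [polyS, polyS, coeF_toLaurent_nat,
            Polynomial.coeff_eq_zero_of_natDegree_lt (by omega : P.natDegree < m),
            coeF_toLaurent_neg _ _ (by omega : (q : ℤ) - m < 0), map_zero, add_zero]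
    have key : ∀ m : ℤ, u (Polynomial.toLaurent Q * T m) = 0 := by
      intro m
      have hm := master u hu Q hQstar (-m)
      rw [hFQ, neg_neg, hz (-m)] at hm
      field_simp at hm
      simpa using hm.symm
    refine LinearMap.ext fun f => ?_
    show u (Polynomial.toLaurent Q * f) = 0
    have hf : f.coeff.sum (fun n c => (AddMonoidAlgebra.single n c : LP)) = f :=
      AddMonoidAlgebra.sum_coeff_single f
    rw [← hf, Finsupp.mul_sum, map_finsuppSum]
    refine Finset.sum_eq_zero fun n hn => ?_
    beta_reduce
    rw [single_eq_C_mul_T, mul_left_comm, u_C_mul, key n, mul_zero]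
end
end

section
/- Let u, v be hermitian functionals not in Δ, related by a rational modification. Then the set I(u,v) = {(L,M) ∈ Λ₀×Λ₀ : u·L = v·M} has a minimal element (L₀,M₀), unique up to multiplication by units of the Laurent polynomial ring, and I(u,v) = {(N·L₀, N·M₀) : N ∈ Λ, N ≠ 0}. -/
open LaurentPolynomial Complex Polynomial

noncomputable section

instance LP.isDomain : IsDomain LP := by
  have := LaurentPolynomial.isLocalization (R := ℂ)
  have hx : (Polynomial.X : ℂ[X]) ≠ 0 := Polynomial.X_ne_zero
  exact IsLocalization.isDomain_of_le_nonZeroDivisors (R := ℂ[X]) (S := LP)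
    (M := Submonoid.powers (Polynomial.X : ℂ[X]))
    (powers_le_nonZeroDivisors_of_noZeroDivisors hx)

instance LP.pid : IsPrincipalIdealRing LP := by
  have := LaurentPolynomial.isLocalization (R := ℂ)
  constructor
  intro J
  have h := IsLocalization.map_comap (Submonoid.powers (Polynomial.X : ℂ[X])) LP J
  obtain ⟨g, hg⟩ := (IsPrincipalIdealRing.principal (J.comap (algebraMap ℂ[X] LP)))
  refine ⟨algebraMap ℂ[X] LP g, ?_⟩
  rw [← h, Ideal.under_def, hg]
  simp [Ideal.map_span]

lemma smulF_apply (u : Func) (L f : LP) : smulF u L f = u (L * f) := rfl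

lemma smulF_mul (u : Func) (N L : LP) : smulF u (N * L) = smulF (smulF u L) N := by
  ext f; simp [smulF_apply, mul_comm, mul_assoc, mul_left_comm]

lemma smulF_add (u : Func) (L L' : LP) : smulF u (L + L') = smulF u L + smulF u L' := by
  ext f; simp [smulF_apply, add_mul]

lemma smulF_sub (u : Func) (L L' : LP) : smulF u (L - L') = smulF u L - smulF u L' := by
  ext f; simp [smulF_apply, sub_mul]

lemma smulF_zero (u : Func) : smulF u 0 = 0 := by ext f; simp [smulF_apply]

/-- If `u` is hermitian and not in `Δ`, then `u·M = 0` forces `M = 0`. -/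
lemma eq_zero_of_smulF (u : Func) (hu : IsHermitian u) (hud : ¬ InDelta u)
    {M : LP} (h : smulF u M = 0) : M = 0 := by
  by_contra hM
  exact hud ⟨hu, M, hM, h⟩

/-- The set `I(u,v)` as an `LP`-submodule of `LP × LP`. -/
def Iset (u v : Func) : Submodule LP (LP × LP) where
  carrier := {p | smulF u p.1 = smulF v p.2}
  add_mem' := by
    intro a b ha hb
    simp only [Set.mem_setOf_eq] at *
    simp [smulF_add, ha, hb]
  zero_mem' := by
    simp only [Set.mem_setOf_eq, Prod.fst_zero, Prod.snd_zero, smulF_zero]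
  smul_mem' := by
    intro c p hp
    simp only [Set.mem_setOf_eq] at *
    show smulF u (c * p.1) = smulF v (c * p.2)
    rw [smulF_mul, smulF_mul, hp]

/-- for hermitian `u, v ∉ Δ` related by a rational modification, the set
`I(u,v) = {(L,M) : u·L = v·M}` has a minimal element `(L₀,M₀)`, unique up to units of the
Laurent polynomial ring, and `I(u,v) = Λ₀·(L₀,M₀)`. -/
theorem stmt8 (u v : Func) (hu : IsHermitian u) (hv : IsHermitian v)
    (hud : ¬ InDelta u) (hvd : ¬ InDelta v)
    (hRM : ∃ L M : LP, L ≠ 0 ∧ M ≠ 0 ∧ smulF u L = smulF v M) :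
    ∃ L₀ M₀ : LP, L₀ ≠ 0 ∧ M₀ ≠ 0 ∧ smulF u L₀ = smulF v M₀ ∧
      (∀ L M : LP, L ≠ 0 → M ≠ 0 → smulF u L = smulF v M →
        ∃ N : LP, N ≠ 0 ∧ L = N * L₀ ∧ M = N * M₀) ∧
      (∀ N : LP, N ≠ 0 → smulF u (N * L₀) = smulF v (N * M₀)) ∧
      (∀ L₁ M₁ : LP, L₁ ≠ 0 → M₁ ≠ 0 → smulF u L₁ = smulF v M₁ →
        (∀ L M : LP, L ≠ 0 → M ≠ 0 → smulF u L = smulF v M →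
          ∃ N : LP, L = N * L₁ ∧ M = N * M₁) →
        ∃ N : LP, IsUnit N ∧ L₁ = N * L₀ ∧ M₁ = N * M₀) := by
  classical
  -- projection of `I(u,v)` onto the first coordinate is an ideal
  set J : Ideal LP := Submodule.map (LinearMap.fst LP LP LP) (Iset u v) with hJ
  obtain ⟨L₀, hL₀span⟩ := (IsPrincipalIdealRing.principal J)
  have hmemJ : ∀ L : LP, L ∈ J ↔ ∃ N : LP, L = N * L₀ := by
    intro L
    rw [hL₀span]
    constructor
    · intro h
      obtain ⟨N, hN⟩ := Ideal.mem_span_singleton'.mp h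
      exact ⟨N, hN.symm⟩
    · rintro ⟨N, rfl⟩
      exact Ideal.mem_span_singleton'.mpr ⟨N, rfl⟩
  -- pick M₀ paired with L₀
  have hL₀J : L₀ ∈ J := by rw [hL₀span]; exact Ideal.mem_span_singleton_self _
  obtain ⟨p, hp, hfst⟩ := hL₀J
  obtain ⟨M₀, hLM₀⟩ : ∃ M₀ : LP, smulF u L₀ = smulF v M₀ :=
    ⟨p.2, by rw [← hfst]; exact hp⟩
  -- uniqueness of the partner
  have hpartner : ∀ L M M' : LP, smulF u L = smulF v M → smulF u L = smulF v M' → M = M' := by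
    intro L M M' h1 h2
    have : smulF v (M - M') = 0 := by rw [smulF_sub, ← h1, ← h2, sub_self]
    exact sub_eq_zero.mp (eq_zero_of_smulF v hv hvd this)
  -- L₀ ≠ 0
  obtain ⟨L, M, hL, hM, hLM⟩ := hRM
  have hLJ : L ∈ J := ⟨(L, M), hLM, rfl⟩
  have hL₀ : L₀ ≠ 0 := by
    rintro rfl
    obtain ⟨N, hN⟩ := (hmemJ L).mp hLJ
    rw [mul_zero] at hN
    exact hL hN
  have hM₀ : M₀ ≠ 0 := by
    rintro rfl
    rw [smulF_zero] at hLM₀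
    exact hL₀ (eq_zero_of_smulF u hu hud hLM₀)
  -- the division property
  have hdiv : ∀ L M : LP, L ≠ 0 → M ≠ 0 → smulF u L = smulF v M →
      ∃ N : LP, N ≠ 0 ∧ L = N * L₀ ∧ M = N * M₀ := by
    intro L M hL hM hLM
    obtain ⟨N, hN⟩ := (hmemJ L).mp ⟨(L, M), hLM, rfl⟩
    have hN0 : N ≠ 0 := by rintro rfl; rw [zero_mul] at hN; exact hL hN
    have hmul : smulF u (N * L₀) = smulF v (N * M₀) := by
      rw [smulF_mul, smulF_mul, hLM₀]
    refine ⟨N, hN0, hN, ?_⟩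
    exact hpartner L M (N * M₀) hLM (hN ▸ hmul)
  refine ⟨L₀, M₀, hL₀, hM₀, hLM₀, hdiv, ?_, ?_⟩
  · intro N _
    rw [smulF_mul, smulF_mul, hLM₀]
  · intro L₁ M₁ hL₁ hM₁ hLM₁ hmin
    obtain ⟨N', hN'L, hN'M⟩ := hmin L₀ M₀ hL₀ hM₀ hLM₀
    obtain ⟨N, hN0, hNL, hNM⟩ := hdiv L₁ M₁ hL₁ hM₁ hLM₁
    have key : L₀ = N' * N * L₀ := by rw [mul_assoc, ← hNL, hN'L]
    have hunit : N' * N = 1 := by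
      have h1 : (1 : LP) * L₀ = (N' * N) * L₀ := by rw [one_mul, ← key]
      exact (mul_right_cancel₀ hL₀ h1).symm
    exact ⟨N, IsUnit.of_mul_eq_one N' (by rw [mul_comm]; exact hunit), hNL, hNM⟩
end
end

section
/- Let u, v be hermitian functionals not in Δ, and suppose u·L = v·M is a minimal rational modification. Then (L_*, M_*) is a unit multiple of (L, M): there exist α ∈ ℂ* and p ∈ ℤ with (z^p·L_*, z^p·M_*) = α·(L, M). -/
open LaurentPolynomial Complex Polynomial

noncomputable section

section Aux

lemma starLP_apply (L : LP) (n : ℤ) : (starLP L).coeff n = (starRingEnd ℂ) (L.coeff (-n)) := rfl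

lemma starLP_zero : starLP 0 = 0 :=
  AddMonoidAlgebra.ext <| Finsupp.ext fun n => by rw [starLP_apply]; simp

lemma starLP_single (k : ℤ) (c : ℂ) :
    starLP (AddMonoidAlgebra.single k c) = AddMonoidAlgebra.single (-k) ((starRingEnd ℂ) c) := by
  refine AddMonoidAlgebra.ext <| Finsupp.ext fun n => ?_
  rw [starLP_apply]
  show (starRingEnd ℂ) (Finsupp.single k c (-n)) = Finsupp.single (-k) ((starRingEnd ℂ) c) n
  rw [Finsupp.single_apply, Finsupp.single_apply]
  by_cases h : n = -k
  · subst h; rw [if_pos (by omega), if_pos (by omega)]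
  · rw [if_neg (by omega), if_neg (by omega), map_zero]

lemma starLP_add (a b : LP) : starLP (a + b) = starLP a + starLP b := by
  refine AddMonoidAlgebra.ext <| Finsupp.ext fun n => ?_
  show (starLP (a + b)).coeff n = (starLP a).coeff n + (starLP b).coeff n
  rw [starLP_apply, starLP_apply, starLP_apply]
  show (starRingEnd ℂ) ((a + b).coeff (-n)) = _
  rw [AddMonoidAlgebra.coeff_add, Finsupp.add_apply, map_add]

lemma starLP_mul (a b : LP) : starLP (a * b) = starLP a * starLP b := by
  induction a using AddMonoidAlgebra.induction_linear with
  | zero => simp [starLP_zero]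
  | add f g hf hg => rw [add_mul, starLP_add, starLP_add, hf, hg, add_mul]
  | single k c =>
    induction b using AddMonoidAlgebra.induction_linear with
    | zero => simp [starLP_zero]
    | add f g hf hg => rw [mul_add, starLP_add, starLP_add, hf, hg, mul_add]
    | single l d =>
      rw [AddMonoidAlgebra.single_mul_single, starLP_single, starLP_single, starLP_single,
        AddMonoidAlgebra.single_mul_single, map_mul, neg_add]

lemma starLP_starLP (L : LP) : starLP (starLP L) = L := by
  refine AddMonoidAlgebra.ext <| Finsupp.ext fun n => ?_
  rw [starLP_apply, starLP_apply, neg_neg, Complex.conj_conj]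

lemma starLP_ne_zero {L : LP} (h : L ≠ 0) : starLP L ≠ 0 := fun h0 =>
  h (by rw [← starLP_starLP L, h0, starLP_zero])

lemma single_eq_smul_T (a : ℤ) (b : ℂ) : (AddMonoidAlgebra.single a b : LP) = b • T a := by
  rw [T, AddMonoidAlgebra.smul_single', mul_one]

lemma smulF_T (u : Func) (L : LP) (n : ℤ) :
    smulF u L (T n) = (coeF L).sum fun k c => c * moment u (k + n) := by
  have hLT : L * T n = (coeF L).sum fun k c => AddMonoidAlgebra.single (k + n) c := by
    conv_lhs => rw [← AddMonoidAlgebra.sum_coeff_single L]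
    rw [Finsupp.sum_mul]
    refine Finsupp.sum_congr fun k _ => ?_
    rw [T, AddMonoidAlgebra.single_mul_single, mul_one]
  show u (L * T n) = _
  rw [hLT, map_finsuppSum]
  refine Finsupp.sum_congr fun k _ => ?_
  rw [single_eq_smul_T, map_smul, smul_eq_mul, moment]

lemma star_apply_T (u : Func) (hu : IsHermitian u) (L : LP) (n : ℤ) :
    smulF u (starLP L) (T n) = (starRingEnd ℂ) (smulF u L (T (-n))) := by
  rw [smulF_T, smulF_T, map_finsuppSum]
  show (coeF (starLP L)).sum _ = _
  simp only [coeF]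
  rw [starLP, AddMonoidAlgebra.coeff_ofCoeff]
  rw [Finsupp.sum_equivMapDomain, Finsupp.sum_mapRange_index (by simp)]
  refine Finsupp.sum_congr fun k _ => ?_
  rw [map_mul]
  congr 1
  have h2 : (Equiv.neg ℤ) k + n = -(k + -n) := by simp [Equiv.neg_apply]; ring
  rw [h2, hu (k + -n)]

lemma funcext {φ ψ : Func} (h : ∀ n, φ (T n) = ψ (T n)) : φ = ψ := by
  refine AddMonoidAlgebra.lhom_ext' fun a => LinearMap.ext fun b => ?_
  show φ (AddMonoidAlgebra.single a b) = ψ (AddMonoidAlgebra.single a b)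
  rw [show (AddMonoidAlgebra.single a b : LP) = b • T a from single_eq_smul_T a b, map_smul, map_smul]
  exact congrArg (b • ·) (h a)

lemma unit_lemma (N N' : LP) (h : N' * N = 1) :
    ∃ (α : ℂ) (k : ℤ), α ≠ 0 ∧ N = LaurentPolynomial.C α * T k := by
  obtain ⟨n, p, hp⟩ := exists_T_pow N
  obtain ⟨m, q, hq⟩ := exists_T_pow N'
  have hpq : Polynomial.toLaurent (q * p) = Polynomial.toLaurent ((X : ℂ[X]) ^ (m + n)) := by
    rw [map_mul, hp, hq, Polynomial.toLaurent_X_pow,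
      show (N' * T (m : ℤ)) * (N * T (n : ℤ)) = (N' * N) * (T (m : ℤ) * T (n : ℤ)) by ring,
      h, one_mul, ← T_add]
    norm_cast
  have hqp : q * p = (X : ℂ[X]) ^ (m + n) := Polynomial.toLaurent_injective hpq
  have hdvd : p ∣ (X : ℂ[X]) ^ (m + n) := ⟨q, by rw [← hqp]; ring⟩
  obtain ⟨i, _, hassoc⟩ := (dvd_prime_pow Polynomial.prime_X (m + n)).mp hdvd
  obtain ⟨uu, hu⟩ := hassoc.symm
  obtain ⟨r, hr, hCr⟩ := Polynomial.isUnit_iff.mp uu.isUnit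
  refine ⟨r, (i : ℤ) - n, isUnit_iff_ne_zero.mp hr, ?_⟩
  have hN : N = Polynomial.toLaurent p * T (-(n : ℤ)) := by
    rw [hp, mul_T_assoc, add_neg_cancel, T_zero, mul_one]
  have hp2 : p = X ^ i * Polynomial.C r := by rw [hCr, hu]
  rw [hN, hp2, map_mul, Polynomial.toLaurent_X_pow, Polynomial.toLaurent_C,
    show (T (i : ℤ) * LaurentPolynomial.C r) * T (-(n : ℤ))
      = LaurentPolynomial.C r * (T (i : ℤ) * T (-(n : ℤ))) by ring,
    ← T_add, ← sub_eq_add_neg]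

lemma C_mul_eq_smul (α : ℂ) (L : LP) : LaurentPolynomial.C α * L = α • L := by
  rw [LaurentPolynomial.C_eq_algebraMap]; exact (Algebra.smul_def α L).symm

end Aux

/-- if `u·L = v·M` is a minimal rational modification between hermitian
functionals not in `Δ`, then `(L_*, M_*)` is a unit multiple of `(L, M)`:
`(z^p L_*, z^p M_*) = α·(L, M)` for some `α ∈ ℂ*`, `p ∈ ℤ`. -/
theorem stmt9 (u v : Func) (hu : IsHermitian u) (hv : IsHermitian v)
    (hud : ¬ InDelta u) (hvd : ¬ InDelta v)
    (L M : LP) (hL : L ≠ 0) (hM : M ≠ 0)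
    (hRM : smulF u L = smulF v M)
    (hmin : ∀ L₁ M₁ : LP, L₁ ≠ 0 → M₁ ≠ 0 → smulF u L₁ = smulF v M₁ →
      ∃ N : LP, L₁ = N * L ∧ M₁ = N * M) :
    ∃ (α : ℂ) (p : ℤ), α ≠ 0 ∧ T p * starLP L = α • L ∧ T p * starLP M = α • M := by
  have key : smulF u (starLP L) = smulF v (starLP M) := by
    refine funcext fun n => ?_
    rw [star_apply_T u hu L n, star_apply_T v hv M n, hRM]
  obtain ⟨N, hNL, hNM⟩ := hmin (starLP L) (starLP M) (starLP_ne_zero hL) (starLP_ne_zero hM) key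
  have hinv : starLP N * N = 1 := by
    have h1 : L = starLP N * N * L := by
      calc L = starLP (starLP L) := (starLP_starLP L).symm
        _ = starLP (N * L) := by rw [hNL]
        _ = starLP N * starLP L := starLP_mul _ _
        _ = starLP N * (N * L) := by rw [hNL]
        _ = starLP N * N * L := (mul_assoc _ _ _).symm
    have h2 : (starLP N * N - 1) * L = 0 := by rw [sub_mul, one_mul, ← h1, sub_self]
    rcases mul_eq_zero.mp h2 with h | h
    · exact sub_eq_zero.mp h
    · exact absurd h hL
  obtain ⟨α, k, hα, hNek⟩ := unit_lemma N (starLP N) hinv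
  refine ⟨α, -k, hα, ?_, ?_⟩
  · rw [hNL, hNek,
      show T (-k) * (LaurentPolynomial.C α * T k * L)
        = LaurentPolynomial.C α * (T (-k) * T k) * L by ring,
      ← T_add, neg_add_cancel, T_zero, mul_one, C_mul_eq_smul]
  · rw [hNM, hNek,
      show T (-k) * (LaurentPolynomial.C α * T k * M)
        = LaurentPolynomial.C α * (T (-k) * T k) * M by ring,
      ← T_add, neg_add_cancel, T_zero, mul_one, C_mul_eq_smul]
end
end

section
/- With F(z) = 1 + (2i/π) Log((1+iz)/(1−iz)) on |z| < 1 and α ≥ 2, the function G(z) = z·F(z) + α satisfies Re G(z) > 0 for all |z| < 1; hence G is a Carathéodory function (holomorphic on the disk with positive real part and G(0) = α > 0). -/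
open LaurentPolynomial Complex Polynomial

noncomputable section

lemma stmt18_aux_ne (z : ℂ) (hz : ‖z‖ < 1) : (1 - Complex.I * z) ≠ 0 := by
  intro h
  have h1 : (1:ℂ) = Complex.I * z := by linear_combination h
  have : ‖(1:ℂ)‖ = ‖(Complex.I * z)‖ := by rw [← h1]
  simp at this hz
  linarith

lemma stmt18_aux_ne2 (z : ℂ) (hz : ‖z‖ < 1) : (1 + Complex.I * z) ≠ 0 := by
  intro h
  have h1 : (1:ℂ) = -(Complex.I * z) := by linear_combination h
  have : ‖(1:ℂ)‖ = ‖(-(Complex.I * z))‖ := by rw [← h1]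
  simp at this hz
  linarith

lemma stmt18_aux_re (z : ℂ) (hz : ‖z‖ < 1) :
    0 < ((1 + Complex.I * z) / (1 - Complex.I * z)).re := by
  have hne := stmt18_aux_ne z hz
  have hns : 0 < Complex.normSq (1 - Complex.I * z) := by
    simpa [Complex.normSq_pos] using hne
  have hz2 : z.re ^ 2 + z.im ^ 2 < 1 := by
    have h1 : Complex.normSq z < 1 := by
      have h2 : ‖z‖ < 1 := hz
      nlinarith [Complex.sq_norm z, norm_nonneg z]
    nlinarith [Complex.normSq_apply z]
  rw [Complex.div_re, ← add_div]
  apply div_pos _ hns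
  simp [Complex.add_re, Complex.add_im, Complex.mul_re, Complex.mul_im, Complex.sub_re,
    Complex.sub_im]
  nlinarith

lemma stmt18_aux_sign (z : ℂ) (hz : ‖z‖ < 1) :
    z.im * Real.log ‖(1 + Complex.I * z) / (1 - Complex.I * z)‖ ≤ 0 := by
  have hne := stmt18_aux_ne z hz
  have hne2 := stmt18_aux_ne2 z hz
  have habsp : 0 < ‖(1 - Complex.I * z)‖ := by simpa using hne
  have habsp2 : 0 < ‖(1 + Complex.I * z)‖ := by simpa using hne2
  have hs : ‖((1 + Complex.I * z) / (1 - Complex.I * z))‖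
      = ‖(1 + Complex.I * z)‖ / ‖(1 - Complex.I * z)‖ := by
    simp [norm_div]
  have hn1 : Complex.normSq (1 + Complex.I * z) = (1 - z.im)^2 + z.re^2 := by
    simp [Complex.normSq_apply, Complex.add_re, Complex.add_im, Complex.mul_re, Complex.mul_im]
    ring
  have hn2 : Complex.normSq (1 - Complex.I * z) = (1 + z.im)^2 + z.re^2 := by
    simp [Complex.normSq_apply, Complex.sub_re, Complex.sub_im, Complex.mul_re, Complex.mul_im]
    ring
  rcases le_or_gt 0 z.im with hy | hy
  · apply mul_nonpos_of_nonneg_of_nonpos hy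
    apply Real.log_nonpos (by positivity)
    rw [hs, div_le_one habsp, Complex.norm_def, Complex.norm_def]
    apply Real.sqrt_le_sqrt
    rw [hn1, hn2]; nlinarith
  · apply mul_nonpos_of_nonpos_of_nonneg (le_of_lt hy)
    apply Real.log_nonneg
    rw [hs, le_div_iff₀ habsp, one_mul, Complex.norm_def, Complex.norm_def]
    apply Real.sqrt_le_sqrt
    rw [hn1, hn2]; nlinarith

/-- with `F(z) = 1 + (2i/π) Log((1+iz)/(1-iz))` on `|z| < 1` and
`α ≥ 2`, the function `G(z) = z·F(z) + α` has `Re G > 0` on the open unit disk; hence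
`G` is a Carathéodory function: holomorphic on the disk, positive real part, `G(0) = α > 0`. -/
theorem stmt18 (α : ℝ) (hα : 2 ≤ α) (F G : ℂ → ℂ)
    (hF : ∀ z : ℂ, F z = 1 + (2 * Complex.I / (Real.pi : ℂ)) *
      Complex.log ((1 + Complex.I * z) / (1 - Complex.I * z)))
    (hG : ∀ z : ℂ, G z = z * F z + (α : ℂ)) :
    (∀ z : ℂ, ‖z‖ < 1 → 0 < (G z).re) ∧
    DifferentiableOn ℂ G (Metric.ball (0 : ℂ) 1) ∧
    G 0 = (α : ℂ) ∧ 0 < α := by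
  have hπ : (0:ℝ) < Real.pi := Real.pi_pos
  have hα0 : (0:ℝ) < α := by linarith
  refine ⟨?_, ?_, ?_, hα0⟩
  · intro z hz
    rw [hG, hF]
    set w := (1 + Complex.I * z) / (1 - Complex.I * z) with hw
    set L := Complex.log w with hL
    have hc : (2 * Complex.I / (Real.pi : ℂ)) = ((2/Real.pi : ℝ):ℂ) * Complex.I := by
      push_cast; ring
    have hre : (z * (1 + (2 * Complex.I / (Real.pi : ℂ)) * L) + (α:ℂ)).re
        = α + z.re - (2/Real.pi) * (z.re * L.im) - (2/Real.pi) * (z.im * L.re) := by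
      rw [hc]
      simp [Complex.add_re, Complex.mul_re, Complex.mul_im, Complex.add_im]
      ring
    rw [hre]
    have harg : |L.im| ≤ Real.pi / 2 := by
      rw [hL, Complex.log_im]
      exact le_of_lt ((Complex.abs_arg_lt_pi_div_two_iff).2 (Or.inl (stmt18_aux_re z hz)))
    have hsign : z.im * L.re ≤ 0 := by
      rw [hL, Complex.log_re]
      exact stmt18_aux_sign z hz
    have hb : z.re * L.im ≤ |z.re| * (Real.pi/2) := by
      calc z.re * L.im ≤ |z.re * L.im| := le_abs_self _
        _ = |z.re| * |L.im| := abs_mul _ _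
        _ ≤ |z.re| * (Real.pi/2) := mul_le_mul_of_nonneg_left harg (abs_nonneg _)
    have h1 : (2/Real.pi) * (z.re * L.im) ≤ |z.re| := by
      have h0 := mul_le_mul_of_nonneg_left hb (le_of_lt (by positivity : (0:ℝ) < 2/Real.pi))
      calc (2/Real.pi) * (z.re * L.im) ≤ (2/Real.pi) * (|z.re| * (Real.pi/2)) := h0
        _ = |z.re| := by field_simp
    have h2 : (2/Real.pi) * (z.im * L.re) ≤ 0 :=
      mul_nonpos_of_nonneg_of_nonpos (by positivity) hsign
    have h3 : -|z.re| ≤ z.re := neg_abs_le _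
    have h4 : |z.re| < 1 := lt_of_le_of_lt (Complex.abs_re_le_norm z) hz
    linarith
  · have hGeq : G = fun z : ℂ => z * (1 + (2 * Complex.I / (Real.pi : ℂ)) *
        Complex.log ((1 + Complex.I * z) / (1 - Complex.I * z))) + (α:ℂ) := by
      funext z; rw [hG, hF]
    rw [hGeq]
    intro z hz
    have hz' : ‖z‖ < 1 := by simpa [Metric.mem_ball, dist_eq_norm] using hz
    have hne := stmt18_aux_ne z hz'
    have hslit : (1 + Complex.I * z) / (1 - Complex.I * z) ∈ Complex.slitPlane :=
      Or.inl (stmt18_aux_re z hz')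
    have hd : DifferentiableAt ℂ (fun z : ℂ => (1 + Complex.I * z) / (1 - Complex.I * z)) z := by
      apply DifferentiableAt.div
      · fun_prop
      · fun_prop
      · exact hne
    apply DifferentiableAt.differentiableWithinAt
    apply DifferentiableAt.add_const
    apply differentiableAt_id.mul
    exact (differentiableAt_const _).add ((differentiableAt_const _).mul (hd.clog hslit))
  · rw [hG 0, hF 0]; simp
end
end

section
/- Let u, v be hermitian functionals with Carathéodory series F, G related by a general LST F·L = G·M + C with z^p L_* = L. Define M⁺ = (M + z^p M_*)/2, M⁻ = (M − z^p M_*)/(2i), C⁺ = (C + z^p C_*)/2, and let v̂ be the hermitian functional whose Laurent series is (G − G_*)/(2i). Then u·L = v·M⁺ − v̂·M⁻ + leb·C⁺ as functionals on Λ. -/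
open LaurentPolynomial Complex Polynomial

noncomputable section

/-! ### Auxiliary lemmas -/

/-- `mulS H · n` as a linear map. -/
def mulSL (H : ℤ → ℂ) (n : ℤ) : LP →ₗ[ℂ] ℂ :=
  (Finsupp.lsum ℂ fun k => LinearMap.id.smulRight (H (n - k))) ∘ₗ
    (AddMonoidAlgebra.coeffLinearEquiv ℂ).toLinearMap

lemma mulSL_apply (H : ℤ → ℂ) (n : ℤ) (N : LP) : mulSL H n N = mulS H N n := rfl

lemma mulSL_single (H : ℤ → ℂ) (n k : ℤ) (c : ℂ) :
    mulSL H n (AddMonoidAlgebra.single k c) = c * H (n - k) := by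
  exact Finsupp.lsum_single (S := ℂ) (fun k => (LinearMap.id : ℂ →ₗ[ℂ] ℂ).smulRight (H (n - k))) k c

lemma coeF_starLP (N : LP) (k : ℤ) :
    coeF (starLP N) k = (starRingEnd ℂ) (coeF N (-k)) := by
  simp [coeF, starLP, Finsupp.equivMapDomain_apply]

/-- A single coefficient Laurent polynomial. -/
def sgl (k : ℤ) (c : ℂ) : LP := AddMonoidAlgebra.single k c

lemma lp_lhom_ext {φ ψ : LP →ₗ[ℂ] ℂ}
    (h : ∀ k c, φ (AddMonoidAlgebra.single k c) = ψ (AddMonoidAlgebra.single k c)) : φ = ψ :=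
  AddMonoidAlgebra.lhom_ext' fun k => LinearMap.ext fun c => h k c

lemma mulSL_sgl (H : ℤ → ℂ) (n k : ℤ) (c : ℂ) :
    mulSL H n (sgl k c) = c * H (n - k) := mulSL_single H n k c

lemma T_mul_single (p k : ℤ) (c : ℂ) :
    (T p : LP) * sgl k c = sgl (p + k) c := by
  have h := AddMonoidAlgebra.single_mul_single (R := ℂ) (m₁ := p) (m₂ := k) (r₁ := 1) (r₂ := c)
  rw [one_mul] at h
  exact h

lemma single_mul_T (n k : ℤ) (c : ℂ) :
    sgl k c * T n = sgl (k + n) c := by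
  have h := AddMonoidAlgebra.single_mul_single (R := ℂ) (m₁ := k) (m₂ := n) (r₁ := c) (r₂ := 1)
  rw [mul_one] at h
  exact h

lemma coeF_T_mul (p : ℤ) (N : LP) (k : ℤ) : coeF (T p * N) k = coeF N (k - p) := by
  have h := AddMonoidAlgebra.coeff_single_mul_apply (R := ℂ) (G := ℤ) N 1 p k
  rw [one_mul] at h
  have h2 : -p + k = k - p := by ring
  rw [h2] at h
  exact h

/-- `mulS` with `T p * N`. -/
lemma mulS_T_mul (H : ℤ → ℂ) (p : ℤ) (N : LP) (n : ℤ) :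
    mulS H (T p * N) n = mulS H N (n - p) := by
  have key : mulSL H n ∘ₗ LinearMap.mulLeft ℂ (T p) = mulSL H (n - p) := by
    apply lp_lhom_ext
    intro k c
    refine Eq.trans ?_ (mulSL_single H (n - p) k c).symm
    show mulSL H n ((T p : LP) * sgl k c) = _
    rw [T_mul_single]
    refine (mulSL_sgl H n (p + k) c).trans ?_
    ring_nf
  exact LinearMap.congr_fun key N

lemma mulS_add_right (H : ℤ → ℂ) (N₁ N₂ : LP) (n : ℤ) :
    mulS H (N₁ + N₂) n = mulS H N₁ n + mulS H N₂ n := by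
  simp only [← mulSL_apply, map_add]

lemma mulS_sub_right (H : ℤ → ℂ) (N₁ N₂ : LP) (n : ℤ) :
    mulS H (N₁ - N₂) n = mulS H N₁ n - mulS H N₂ n := by
  simp only [← mulSL_apply, map_sub]

lemma mulS_smul_right (H : ℤ → ℂ) (a : ℂ) (N : LP) (n : ℤ) :
    mulS H (a • N) n = a * mulS H N n := by
  simp only [← mulSL_apply, map_smul, smul_eq_mul]

/-- Linearity of `mulS` in the series variable. -/
lemma mulS_comb (H H₁ H₂ : ℤ → ℂ) (a b : ℂ) (h : ∀ n, H n = a * H₁ n + b * H₂ n)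
    (N : LP) (n : ℤ) : mulS H N n = a * mulS H₁ N n + b * mulS H₂ N n := by
  simp only [mulS, Finsupp.sum]
  rw [Finset.mul_sum, Finset.mul_sum, ← Finset.sum_add_distrib]
  refine Finset.sum_congr rfl fun k _ => ?_
  rw [h]; ring

/-- Star-conjugation of a `mulS` identity. -/
lemma starS_mulS (H : ℤ → ℂ) (N : LP) (n : ℤ) :
    starS (mulS H N) n = mulS (starS H) (starLP N) n := by
  unfold starS mulS starLP coeF
  rw [AddMonoidAlgebra.coeff_ofCoeff, Finsupp.equivMapDomain_eq_mapDomain]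
  rw [Finsupp.sum_mapDomain_index_inj (Equiv.injective _)]
  rw [Finsupp.sum_mapRange_index (by simp)]
  rw [map_finsuppSum]
  refine Finsupp.sum_congr fun k _ => ?_
  rw [map_mul]
  simp only [Equiv.neg_apply]
  rw [show -(n - -k) = -n - k from by ring]

lemma sgl_eq_smul_T (k : ℤ) (c : ℂ) : sgl k c = c • T k := by
  rw [sgl, show (T k : LP) = AddMonoidAlgebra.single k 1 from rfl, AddMonoidAlgebra.smul_single',
    mul_one]

lemma apply_single (w : Func) (k : ℤ) (c : ℂ) :
    w (sgl k c) = c * moment w k := by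
  rw [sgl_eq_smul_T, map_smul, smul_eq_mul]
  rfl

/-- Evaluation of a modified functional at `T n`. -/
lemma smulF_apply_T (w : Func) (N : LP) (n : ℤ) :
    smulF w N (T n) = mulS (LS w) N (-n) := by
  have key : (w ∘ₗ LinearMap.mulRight ℂ (T n)) = mulSL (LS w) (-n) := by
    apply lp_lhom_ext
    intro k c
    refine Eq.trans ?_ (mulSL_single (LS w) (-n) k c).symm
    show w (sgl k c * T n) = _
    rw [single_mul_T, apply_single]
    congr 1
    show moment w (k + n) = moment w (-(-n - k))
    congr 1
    ring
  exact LinearMap.congr_fun key N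

lemma smulF_apply_sgl (w : Func) (N : LP) (k : ℤ) (c : ℂ) :
    smulF w N (sgl k c) = c * mulS (LS w) N (-k) := by
  rw [sgl_eq_smul_T, map_smul, smul_eq_mul, smulF_apply_T]

lemma moment_lebF (k : ℤ) : moment lebF k = if k = 0 then 1 else 0 := by
  show (Finsupp.single k (1 : ℂ) : ℤ →₀ ℂ) 0 = _
  rw [Finsupp.single_apply]

lemma mulS_LS_lebF (N : LP) (n : ℤ) : mulS (LS lebF) N n = coeF N n := by
  have key : mulSL (LS lebF) n = (Finsupp.lapply n : (ℤ →₀ ℂ) →ₗ[ℂ] ℂ) ∘ₗ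
      (AddMonoidAlgebra.coeffLinearEquiv ℂ).toLinearMap := by
    apply lp_lhom_ext
    intro k c
    refine (mulSL_single (LS lebF) n k c).trans ?_
    show c * moment lebF (-(n - k)) = (Finsupp.single k c : ℤ →₀ ℂ) n
    rw [moment_lebF, Finsupp.single_apply]
    simp only [show (-(n - k) = 0) ↔ (k = n) from by omega]
    split_ifs <;> simp
  exact LinearMap.congr_fun key N

/-- The Laurent series of a hermitian functional is `(F + F_*)/2`. -/
lemma LS_eq_of_hermitian (u : Func) (hu : IsHermitian u) (n : ℤ) :
    LS u n = (1 / 2 : ℂ) * CS u n + (1 / 2 : ℂ) * starS (CS u) n := by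
  rcases lt_trichotomy n 0 with h | h | h
  · have h0 : CS u n = 0 := by
      simp only [CS]; rw [if_neg (by omega), if_neg (by omega)]
    have h1 : starS (CS u) n = 2 * moment u (-n) := by
      simp only [starS, CS]
      rw [if_neg (by omega), if_pos (by omega), neg_neg, map_mul, ← hu n]
      congr 1
      exact map_ofNat (starRingEnd ℂ) 2
    rw [show LS u n = moment u (-n) from rfl, h0, h1]; ring
  · subst h
    have h0 := hu 0
    rw [neg_zero] at h0
    have h1 : starS (CS u) 0 = moment u 0 := by
      simp only [starS, neg_zero, CS, if_pos rfl]
      exact h0.symm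
    rw [show LS u 0 = moment u (-0) from rfl, neg_zero, h1]
    have hcs : CS u 0 = moment u 0 := by simp [CS]
    rw [hcs]; ring
  · have h0 : CS u n = 2 * moment u (-n) := by
      simp only [CS]; rw [if_neg (by omega), if_pos h]
    have h1 : starS (CS u) n = 0 := by
      simp only [starS, CS]
      rw [if_neg (by omega), if_neg (by omega)]
      simp
    rw [show LS u n = moment u (-n) from rfl, h0, h1]; ring

lemma two_I_ne : (2 : ℂ) * Complex.I ≠ 0 := by simp [Complex.I_ne_zero]

lemma one_div_two_I : (1 : ℂ) / (2 * Complex.I) = -Complex.I / 2 := by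
  rw [div_eq_div_iff two_I_ne (two_ne_zero)]
  linear_combination (2 : ℂ) * Complex.I_mul_I

/-- for a general LST `F·L = G·M + C` with `z^p L_* = L`, setting
`M⁺ = (M + z^p M_*)/2`, `M⁻ = (M - z^p M_*)/(2i)`, `C⁺ = (C + z^p C_*)/2` and letting
`v̂` be the hermitian functional with Laurent series `(G - G_*)/(2i)`, one has
`u·L = v·M⁺ - v̂·M⁻ + leb·C⁺`. -/
theorem stmt19 (u v vhat : Func) (hu : IsHermitian u) (hv : IsHermitian v)
    (hvhat : IsHermitian vhat)
    (hvhatLS : ∀ n : ℤ, LS vhat n = (CS v n - starS (CS v) n) / (2 * Complex.I))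
    (L M C : LP) (p : ℤ) (hLne : L ≠ 0) (hMne : M ≠ 0)
    (hLs : T p * starLP L = L)
    (hLST : mulS (CS u) L = (fun n => mulS (CS v) M n + coeF C n)) :
    smulF u L =
      smulF v ((1 / 2 : ℂ) • (M + T p * starLP M))
        - smulF vhat ((1 / (2 * Complex.I)) • (M - T p * starLP M))
        + smulF lebF ((1 / 2 : ℂ) • (C + T p * starLP C)) := by
  have h1 : ∀ n : ℤ, mulS (CS u) L n = mulS (CS v) M n + coeF C n := fun n => congrFun hLST n
  have h2 : ∀ n : ℤ, mulS (starS (CS u)) L n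
      = mulS (starS (CS v)) (T p * starLP M) n + coeF (T p * starLP C) n := by
    intro n
    have h2' : mulS (starS (CS u)) (starLP L) (n - p)
        = mulS (starS (CS v)) (starLP M) (n - p) + coeF (starLP C) (n - p) := by
      rw [← starS_mulS, ← starS_mulS]
      show starS (mulS (CS u) L) (n - p) = _
      rw [show mulS (CS u) L = fun m => mulS (CS v) M m + coeF C m from hLST]
      simp only [starS, coeF_starLP, map_add]
    calc mulS (starS (CS u)) L n = mulS (starS (CS u)) (T p * starLP L) n := by rw [hLs]
      _ = mulS (starS (CS u)) (starLP L) (n - p) := mulS_T_mul _ _ _ _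
      _ = mulS (starS (CS v)) (starLP M) (n - p) + coeF (starLP C) (n - p) := h2'
      _ = _ := by rw [← mulS_T_mul, ← coeF_T_mul]
  have key : ∀ n : ℤ, mulS (LS u) L n
      = mulS (LS v) ((1 / 2 : ℂ) • (M + T p * starLP M)) n
        - mulS (LS vhat) ((1 / (2 * Complex.I)) • (M - T p * starLP M)) n
        + mulS (LS lebF) ((1 / 2 : ℂ) • (C + T p * starLP C)) n := by
    intro n
    have hvhLS : ∀ m, LS vhat m
        = (-Complex.I / 2) * CS v m + (Complex.I / 2) * starS (CS v) m := by
      intro m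
      rw [hvhatLS m, div_eq_iff two_I_ne]
      linear_combination (CS v m - starS (CS v) m) * Complex.I_mul_I
    have eu := mulS_comb (LS u) (CS u) (starS (CS u)) (1/2) (1/2)
      (LS_eq_of_hermitian u hu) L n
    have ev := mulS_comb (LS v) (CS v) (starS (CS v)) (1/2) (1/2)
      (LS_eq_of_hermitian v hv)
    have evh := mulS_comb (LS vhat) (CS v) (starS (CS v)) (-Complex.I/2) (Complex.I/2) hvhLS
    rw [eu, h1 n, h2 n,
      mulS_smul_right, mulS_smul_right, mulS_smul_right,
      mulS_add_right, mulS_sub_right, mulS_add_right,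
      ev M n, ev (T p * starLP M) n, evh M n, evh (T p * starLP M) n,
      mulS_LS_lebF, mulS_LS_lebF, one_div_two_I]
    linear_combination ((mulS (CS v) M n - mulS (starS (CS v)) M n
      - mulS (CS v) (T p * starLP M) n + mulS (starS (CS v)) (T p * starLP M) n)/4)
      * Complex.I_mul_I
  apply lp_lhom_ext
  intro k c
  calc (smulF u L) (sgl k c)
      = c * mulS (LS u) L (-k) := smulF_apply_sgl u L k c
    _ = c * (mulS (LS v) ((1 / 2 : ℂ) • (M + T p * starLP M)) (-k)
          - mulS (LS vhat) ((1 / (2 * Complex.I)) • (M - T p * starLP M)) (-k)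
          + mulS (LS lebF) ((1 / 2 : ℂ) • (C + T p * starLP C)) (-k)) := by rw [key (-k)]
    _ = smulF v ((1 / 2 : ℂ) • (M + T p * starLP M)) (sgl k c)
          - smulF vhat ((1 / (2 * Complex.I)) • (M - T p * starLP M)) (sgl k c)
          + smulF lebF ((1 / 2 : ℂ) • (C + T p * starLP C)) (sgl k c) := by
        rw [smulF_apply_sgl, smulF_apply_sgl, smulF_apply_sgl]; ring
    _ = _ := by
        simp only [LinearMap.sub_apply, LinearMap.add_apply]
        rfl
end
end
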